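/- Let 𝒟 be a dataset, Π a program, and I a two-valued interpretation. Then I is a stable HT-model of 𝒟 and Π if and only if I is a two-valued stable model of 𝒟 and Π, i.e. if and only if I is the least fixpoint of the operator X ↦ A¹_{𝒟,Π}(X,I) and the least fixpoint of the operator X ↦ A²_{𝒟,Π}(I,X). -/

import Mathlib

/- DatalogMTL with negation: common definitions.
   The timeline `T` is an arbitrary linearly ordered additive commutative group
   (covering both ℤ and ℚ); `A` is the type of ground relational atoms. -/

namespace DatalogMTL

/-- An interval on the timeline: a nonempty convex subset whose infimum and
supremum lie in `T ∪ {−∞, +∞}` (i.e. if bounded below/above, a greatest lower /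
least upper bound exists in `T`). -/
structure TInterval (T : Type*) [AddCommGroup T] [LinearOrder T] [IsOrderedAddMonoid T] where
  carrier : Set T
  nonempty : carrier.Nonempty
  convex : ∀ ⦃t₁ t₂ t : T⦄, t₁ ∈ carrier → t₂ ∈ carrier → t₁ < t → t < t₂ → t ∈ carrier
  exists_glb : BddBelow carrier → ∃ a, IsGLB carrier a
  exists_lub : BddAbove carrier → ∃ b, IsLUB carrier b

/-- A non-negative interval. -/
def TInterval.Nonneg {T : Type*} [AddCommGroup T] [LinearOrder T] [IsOrderedAddMonoid T] (δ : TInterval T) : Prop :=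
  ∀ t ∈ δ.carrier, 0 ≤ t

/-- The type of non-negative intervals. -/
abbrev NNInterval (T : Type*) [AddCommGroup T] [LinearOrder T] [IsOrderedAddMonoid T] :=
  {δ : TInterval T // δ.Nonneg}

/-- A (two-valued) interpretation assigns to each timepoint a set of ground
relational atoms; the order is pointwise inclusion. -/
abbrev Interp (T A : Type*) := T → Set A

/-- Ground metric atoms. -/
inductive MetricAtom (T : Type*) [AddCommGroup T] [LinearOrder T] [IsOrderedAddMonoid T] (A : Type*) where
  | top
  | bot
  | rel (a : A)
  | dMinus (δ : NNInterval T) (M : MetricAtom T A)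
  | dPlus (δ : NNInterval T) (M : MetricAtom T A)
  | boxMinus (δ : NNInterval T) (M : MetricAtom T A)
  | boxPlus (δ : NNInterval T) (M : MetricAtom T A)
  | sSince (δ : NNInterval T) (M₁ M₂ : MetricAtom T A)
  | sUntil (δ : NNInterval T) (M₁ M₂ : MetricAtom T A)

/-- Ground head atoms: `⊤ | P(s) | ⊟_δ M | ⊞_δ M`. -/
inductive HeadAtom (T : Type*) [AddCommGroup T] [LinearOrder T] [IsOrderedAddMonoid T] (A : Type*) where
  | top
  | rel (a : A)
  | boxMinus (δ : NNInterval T) (M : HeadAtom T A)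
  | boxPlus (δ : NNInterval T) (M : HeadAtom T A)

variable {T A : Type*} [AddCommGroup T] [LinearOrder T] [IsOrderedAddMonoid T]

/-- Head atoms are metric atoms. -/
def HeadAtom.toMetric : HeadAtom T A → MetricAtom T A
  | .top => .top
  | .rel a => .rel a
  | .boxMinus δ M => .boxMinus δ M.toMetric
  | .boxPlus δ M => .boxPlus δ M.toMetric

/-- Two-valued semantics: `sat I M t` holds iff `⟦M⟧_I(t) = true`
(the truth order `false ≤τ true` is implication). -/
def sat (I : Interp T A) : MetricAtom T A → T → Prop
  | .top, _ => True
  | .bot, _ => False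
  | .rel a, t => a ∈ I t
  | .dMinus δ M, t => ∃ t', t - t' ∈ δ.1.carrier ∧ sat I M t'
  | .dPlus δ M, t => ∃ t', t' - t ∈ δ.1.carrier ∧ sat I M t'
  | .boxMinus δ M, t => ∀ t', t - t' ∈ δ.1.carrier → sat I M t'
  | .boxPlus δ M, t => ∀ t', t' - t ∈ δ.1.carrier → sat I M t'
  | .sSince δ M₁ M₂, t =>
      ∃ t', t - t' ∈ δ.1.carrier ∧ sat I M₂ t' ∧ ∀ t'', t' < t'' → t'' < t → sat I M₁ t''
  | .sUntil δ M₁ M₂, t =>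
      ∃ t', t' - t ∈ δ.1.carrier ∧ sat I M₂ t' ∧ ∀ t'', t < t'' → t'' < t' → sat I M₁ t''

/-- A ground rule body `M₁ ∧ … ∧ M_k ∧ not M_{k+1} ∧ … ∧ not M_m`. -/
structure Body (T : Type*) [AddCommGroup T] [LinearOrder T] [IsOrderedAddMonoid T] (A : Type*) where
  pos : List (MetricAtom T A)
  neg : List (MetricAtom T A)

/-- Two-valued evaluation of a body: the `≤τ`-infimum (conjunction) of its literals. -/
def Body.holds (B : Body T A) (I : Interp T A) (t : T) : Prop :=
  (∀ M ∈ B.pos, sat I M t) ∧ (∀ M ∈ B.neg, ¬ sat I M t)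

/-- A ground rule `M ← B`. -/
structure Rule (T : Type*) [AddCommGroup T] [LinearOrder T] [IsOrderedAddMonoid T] (A : Type*) where
  head : HeadAtom T A
  body : Body T A

/-- A program, represented by its grounding `ground(Π)`: a set of ground rules. -/
abbrev Program (T : Type*) [AddCommGroup T] [LinearOrder T] [IsOrderedAddMonoid T] (A : Type*) := Set (Rule T A)

/-- The function `F` linking a ground head atom to the (atom, timepoint) pairs it refers to. -/
def F : HeadAtom T A → T → Set (HeadAtom T A × T)
  | .boxMinus δ M, t => ⋃ t' ∈ {s : T | t - s ∈ δ.1.carrier}, F M t'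
  | .boxPlus δ M, t => ⋃ t' ∈ {s : T | s - t ∈ δ.1.carrier}, F M t'
  | .top, t => {(.top, t)}
  | .rel a, t => {(.rel a, t)}

/-- A dataset: a finite set of relational facts `P(s)@δ`. -/
structure Dataset (T : Type*) [AddCommGroup T] [LinearOrder T] [IsOrderedAddMonoid T] (A : Type*) where
  facts : Set (A × TInterval T)
  finite : facts.Finite

/-- `I` is a model of the dataset `D`. -/
def Interp.modelOfDataset (I : Interp T A) (D : Dataset T A) : Prop :=
  ∀ a δ, (a, δ) ∈ D.facts → ∀ t ∈ δ.carrier, a ∈ I t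

/-- `I` is a two-valued model of `D` and `Π`. -/
def IsTwoValModel (I : Interp T A) (D : Dataset T A) (P : Program T A) : Prop :=
  I.modelOfDataset D ∧ ∀ r ∈ P, ∀ t : T, r.body.holds I t → sat I r.head.toMetric t

/- Three-valued truth values are identified with consistent pairs of (Prop-valued)
truth values: `true = (True, True)`, `undef = (False, True)`, `false = (False, False)`.
The truth order `false ≤τ undef ≤τ true` is the componentwise order. -/

/-- The three-valued value of a ground metric atom in `𝓘 = (I₁, I₂)`. -/
def tv3 (I₁ I₂ : Interp T A) (M : MetricAtom T A) (t : T) : Prop × Prop :=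
  (sat I₁ M t, sat I₂ M t)

/-- The three-valued value of a negated ground metric atom `not M` in `𝓘 = (I₁, I₂)`:
the inverse `(·)⁻¹` of the value of `M`. -/
def tv3Not (I₁ I₂ : Interp T A) (M : MetricAtom T A) (t : T) : Prop × Prop :=
  (¬ sat I₂ M t, ¬ sat I₁ M t)

/-- Three-valued evaluation of a body: the `≤τ`-infimum of the values of its literals. -/
def Body.holds3 (B : Body T A) (I₁ I₂ : Interp T A) (t : T) : Prop × Prop :=
  ((∀ M ∈ B.pos, sat I₁ M t) ∧ (∀ M ∈ B.neg, ¬ sat I₂ M t),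
   (∀ M ∈ B.pos, sat I₂ M t) ∧ (∀ M ∈ B.neg, ¬ sat I₁ M t))

/-- The truth order `≤τ` on (pair-encoded) truth values. -/
def tauLE (u v : Prop × Prop) : Prop := (u.1 → v.1) ∧ (u.2 → v.2)

/-- The precision order `≤p` on (pair-encoded) truth values: `undef ≤p false`, `undef ≤p true`. -/
def precLE (u v : Prop × Prop) : Prop := (u.1 → v.1) ∧ (v.2 → u.2)

/-- A truth value equals `true = (True, True)`. -/
def tvIsTrue (v : Prop × Prop) : Prop := v.1 ∧ v.2

/-- A truth value differs from `false = (False, False)`. -/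
def tvNotFalse (v : Prop × Prop) : Prop := v.1 ∨ v.2

/-- The `≤τ`-infimum of a set of (pair-encoded) truth values. -/
def tvInf (S : Set (Prop × Prop)) : Prop × Prop := (∀ v ∈ S, v.1, ∀ v ∈ S, v.2)

/-- `(I₁, I₂)` is a three-valued model of the program `Π`. -/
def IsThreeValModelOfProgram (I₁ I₂ : Interp T A) (P : Program T A) : Prop :=
  ∀ r ∈ P, ∀ t : T, tauLE (r.body.holds3 I₁ I₂ t) (tv3 I₁ I₂ r.head.toMetric t)

/-- `(I₁, I₂)` is a three-valued model of `D` and `Π`. -/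
def IsThreeValModel (I₁ I₂ : Interp T A) (D : Dataset T A) (P : Program T A) : Prop :=
  IsThreeValModelOfProgram I₁ I₂ P ∧ I₁.modelOfDataset D

/-- The atoms holding at `t` by virtue of the dataset alone. -/
def dataFacts (D : Dataset T A) (t : T) : Set A :=
  {a | ∃ δ : TInterval T, (a, δ) ∈ D.facts ∧ t ∈ δ.carrier}

/-- The immediate consequence operator `T_{𝒟,Π}`. -/
def Tds (D : Dataset T A) (P : Program T A) (I : Interp T A) : Interp T A := fun t =>
  dataFacts D t ∪
    {a | ∃ r ∈ P, ∃ t' : T, r.body.holds I t' ∧ (HeadAtom.rel a, t) ∈ F r.head t'}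

/-- The first component `A¹_{𝒟,Π}` of the three-valued immediate consequence operator. -/
def A1 (D : Dataset T A) (P : Program T A) (I₁ I₂ : Interp T A) : Interp T A := fun t =>
  dataFacts D t ∪
    {a | ∃ r ∈ P, ∃ t' : T, tvIsTrue (r.body.holds3 I₁ I₂ t') ∧ (HeadAtom.rel a, t) ∈ F r.head t'}

/-- The second component `A²_{𝒟,Π}` of the three-valued immediate consequence operator. -/
def A2 (D : Dataset T A) (P : Program T A) (I₁ I₂ : Interp T A) : Interp T A := fun t =>
  dataFacts D t ∪
    {a | ∃ r ∈ P, ∃ t' : T, tvNotFalse (r.body.holds3 I₁ I₂ t') ∧ (HeadAtom.rel a, t) ∈ F r.head t'}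

/-- `(I₁, I₂)` is an HT-model of `D` and `Π` (Definition of Wałęga et al.). -/
def IsHTModel (D : Dataset T A) (P : Program T A) (I₁ I₂ : Interp T A) : Prop :=
  I₁.modelOfDataset D ∧ ∀ r ∈ P, ∀ t : T,
    (((∀ M ∈ r.body.pos, sat I₁ M t) ∧ (∀ M ∈ r.body.neg, ¬ sat I₂ M t)) →
        sat I₁ r.head.toMetric t) ∧
    (((∀ M ∈ r.body.pos, sat I₂ M t) ∧ (∀ M ∈ r.body.neg, ¬ sat I₂ M t)) →
        sat I₂ r.head.toMetric t)

/-- `I` is a stable HT-model of `D` and `Π`: `(I,I)` is an HT-model and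
`I = ⊓ {J : (J,I) is an HT-model of D and Π}`. -/
def IsStableHTModel (D : Dataset T A) (P : Program T A) (I : Interp T A) : Prop :=
  IsHTModel D P I I ∧ I = sInf {J : Interp T A | IsHTModel D P J I}

end DatalogMTL

namespace DatalogMTL

section Aux

variable {T A : Type*} [AddCommGroup T] [LinearOrder T] [IsOrderedAddMonoid T]

/-- Satisfaction of metric atoms is monotone in the interpretation. -/
theorem sat_mono {I J : Interp T A} (h : ∀ t, I t ⊆ J t) :
    ∀ (M : MetricAtom T A) (t : T), sat I M t → sat J M t := by
  intro M
  induction M with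
  | top => intro t _; trivial
  | bot => intro t hf; exact hf.elim
  | rel a => intro t ht; exact h t ht
  | dMinus δ M ih => rintro t ⟨t', h1, h2⟩; exact ⟨t', h1, ih t' h2⟩
  | dPlus δ M ih => rintro t ⟨t', h1, h2⟩; exact ⟨t', h1, ih t' h2⟩
  | boxMinus δ M ih => intro t ht t' h1; exact ih t' (ht t' h1)
  | boxPlus δ M ih => intro t ht t' h1; exact ih t' (ht t' h1)
  | sSince δ M₁ M₂ ih₁ ih₂ =>
      rintro t ⟨t', h1, h2, h3⟩
      exact ⟨t', h1, ih₂ t' h2, fun t'' ha hb => ih₁ t'' (h3 t'' ha hb)⟩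
  | sUntil δ M₁ M₂ ih₁ ih₂ =>
      rintro t ⟨t', h1, h2, h3⟩
      exact ⟨t', h1, ih₂ t' h2, fun t'' ha hb => ih₁ t'' (h3 t'' ha hb)⟩

/-- Satisfaction of a head atom is equivalent to membership of all the atoms
referenced by `F`. -/
theorem sat_head_iff (K : Interp T A) (M : HeadAtom T A) :
    ∀ t : T, sat K M.toMetric t ↔
      ∀ a s, (HeadAtom.rel a, s) ∈ F M t → a ∈ K s := by
  induction M with
  | top =>
      intro t
      simp [HeadAtom.toMetric, sat, F]
  | rel b =>
      intro t
      constructor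
      · intro hb a s hmem
        simp only [F, Set.mem_singleton_iff, Prod.mk.injEq] at hmem
        obtain ⟨h1, h2⟩ := hmem
        cases h1; cases h2; exact hb
      · intro h
        exact h b t (by simp [F])
  | boxMinus δ M ih =>
      intro t
      constructor
      · intro h a s hmem
        simp only [F, Set.mem_iUnion, Set.mem_setOf_eq] at hmem
        obtain ⟨t', ht', hm⟩ := hmem
        exact (ih t').1 (h t' ht') a s hm
      · intro h t' ht'
        refine (ih t').2 fun a s hm => h a s ?_
        simp only [F, Set.mem_iUnion, Set.mem_setOf_eq]
        exact ⟨t', ht', hm⟩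
  | boxPlus δ M ih =>
      intro t
      constructor
      · intro h a s hmem
        simp only [F, Set.mem_iUnion, Set.mem_setOf_eq] at hmem
        obtain ⟨t', ht', hm⟩ := hmem
        exact (ih t').1 (h t' ht') a s hm
      · intro h t' ht'
        refine (ih t').2 fun a s hm => h a s ?_
        simp only [F, Set.mem_iUnion, Set.mem_setOf_eq]
        exact ⟨t', ht', hm⟩

/-- The monotone "reduct" operator `R_I`: positive body atoms are evaluated at the
argument, negative body atoms at the fixed interpretation `I`. -/
def reduct (D : Dataset T A) (P : Program T A) (I : Interp T A) :
    Interp T A →o Interp T A where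
  toFun X := fun t => dataFacts D t ∪
    {a | ∃ r ∈ P, ∃ t' : T, ((∀ M ∈ r.body.pos, sat X M t') ∧
        (∀ M ∈ r.body.neg, ¬ sat I M t')) ∧ (HeadAtom.rel a, t) ∈ F r.head t'}
  monotone' := by
    intro X Y hXY t a ha
    rcases ha with h | ⟨r, hr, t', ⟨hp, hn⟩, hF⟩
    · exact Or.inl h
    · exact Or.inr ⟨r, hr, t',
        ⟨fun M hM => sat_mono (fun s => hXY s) M t' (hp M hM), hn⟩, hF⟩

theorem mem_reduct {D : Dataset T A} {P : Program T A} {I X : Interp T A} {t : T} {a : A} :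
    a ∈ reduct D P I X t ↔ a ∈ dataFacts D t ∨
      ∃ r ∈ P, ∃ t' : T, ((∀ M ∈ r.body.pos, sat X M t') ∧
        (∀ M ∈ r.body.neg, ¬ sat I M t')) ∧ (HeadAtom.rel a, t) ∈ F r.head t' :=
  Iff.rfl

end Aux

end DatalogMTL
/-- `I` is a stable HT-model of `D` and `Π` iff `I` is a two-valued
stable model of `D` and `Π`, i.e. iff `I` is the least fixpoint of
`X ↦ A¹_{𝒟,Π}(X, I)` and the least fixpoint of `X ↦ A²_{𝒟,Π}(I, X)`. -/
theorem statement17 {T A : Type*} [AddCommGroup T] [LinearOrder T] [IsOrderedAddMonoid T]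
    (D : DatalogMTL.Dataset T A) (P : DatalogMTL.Program T A)
    (I : DatalogMTL.Interp T A) :
    DatalogMTL.IsStableHTModel D P I ↔
      (IsLeast {X : DatalogMTL.Interp T A | DatalogMTL.A1 D P X I = X} I ∧
       IsLeast {X : DatalogMTL.Interp T A | DatalogMTL.A2 D P I X = X} I) := by
  open DatalogMTL in
  constructor
  · rintro ⟨⟨hD, hrules⟩, hinf⟩
    have hlow : ∀ J, IsHTModel D P J I → I ≤ J := fun J hJ =>
      (le_of_eq hinf).trans (sInf_le hJ)
    have cond2 : ∀ r ∈ P, ∀ t : T, Body.holds r.body I t → sat I r.head.toMetric t :=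
      fun r hr t hb => (hrules r hr t).1 hb
    -- `A1 D P I I ≤ I`
    have hpre : ∀ t, A1 D P I I t ⊆ I t := by
      intro t a ha
      rcases ha with ha | ⟨r, hr, t', htv, hF⟩
      · obtain ⟨δ, hmem, ht⟩ := ha
        exact hD _ _ hmem t ht
      · exact (sat_head_iff I r.head t').1 (cond2 r hr t' ⟨htv.1.1, htv.1.2⟩) a t hF
    -- `I ≤ A1 D P I I`, via the HT-model `A1 D P I I ⊓ I`
    have hJmod : IsHTModel D P (fun t => A1 D P I I t ∩ I t) I := by
      refine ⟨?_, ?_⟩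
      · intro a δ hmem t ht
        exact ⟨Or.inl ⟨δ, hmem, ht⟩, hD a δ hmem t ht⟩
      · intro r hr t
        refine ⟨?_, (hrules r hr t).2⟩
        rintro ⟨hpos, hneg⟩
        have hposI : ∀ M ∈ r.body.pos, sat I M t := fun M hM =>
          sat_mono (fun s => Set.inter_subset_right) M t (hpos M hM)
        refine (sat_head_iff _ r.head t).2 fun a s hF => ⟨?_, ?_⟩
        · exact Or.inr ⟨r, hr, t, ⟨⟨hposI, hneg⟩, ⟨hposI, hneg⟩⟩, hF⟩
        · exact (sat_head_iff I r.head t).1 (cond2 r hr t ⟨hposI, hneg⟩) a s hF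
    have hfix1 : A1 D P I I = I := by
      refine le_antisymm (fun t => hpre t) ?_
      exact fun t a ha => ((hlow _ hJmod t) ha).1
    have hleast1 : ∀ X, A1 D P X I = X → I ≤ X := by
      intro X hX
      have hXI : ∀ s, X s ⊆ I s := by
        intro s a ha
        rw [← hX] at ha
        rcases ha with ha | ⟨r, hr, t', htv, hF⟩
        · obtain ⟨δ, hmem, ht⟩ := ha
          exact hD _ _ hmem s ht
        · exact (sat_head_iff I r.head t').1 (cond2 r hr t' ⟨htv.2.1, htv.1.2⟩) a s hF
      have hXS : IsHTModel D P X I := by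
        refine ⟨?_, ?_⟩
        · intro a δ hmem t ht
          rw [← hX]
          exact Or.inl ⟨δ, hmem, ht⟩
        · intro r hr t
          refine ⟨?_, (hrules r hr t).2⟩
          rintro ⟨hpos, hneg⟩
          have hposI : ∀ M ∈ r.body.pos, sat I M t := fun M hM =>
            sat_mono hXI M t (hpos M hM)
          have hnegX : ∀ M ∈ r.body.neg, ¬ sat X M t := fun M hM hs =>
            hneg M hM (sat_mono hXI M t hs)
          refine (sat_head_iff X r.head t).2 fun a s hF => ?_
          rw [← hX]
          exact Or.inr ⟨r, hr, t, ⟨⟨hpos, hneg⟩, ⟨hposI, hnegX⟩⟩, hF⟩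
      exact hlow X hXS
    have hfix2 : A2 D P I I = I := by
      have h12 : A2 D P I I = A1 D P I I := by
        funext t
        ext a
        simp only [A1, A2, Set.mem_union, Set.mem_setOf_eq]
        constructor
        · rintro (h | ⟨r, hr, t', htv, hF⟩)
          · exact Or.inl h
          · refine Or.inr ⟨r, hr, t', ?_, hF⟩
            rcases htv with h | h
            · exact ⟨h, h⟩
            · exact ⟨h, h⟩
        · rintro (h | ⟨r, hr, t', htv, hF⟩)
          · exact Or.inl h
          · exact Or.inr ⟨r, hr, t', Or.inl htv.1, hF⟩
      rw [h12, hfix1]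
    have hleast2 : ∀ X, A2 D P I X = X → I ≤ X := by
      intro X hX
      have hJmod2 : IsHTModel D P (fun t => X t ∩ I t) I := by
        refine ⟨?_, ?_⟩
        · intro a δ hmem t ht
          refine ⟨?_, hD a δ hmem t ht⟩
          rw [← hX]
          exact Or.inl ⟨δ, hmem, ht⟩
        · intro r hr t
          refine ⟨?_, (hrules r hr t).2⟩
          rintro ⟨hpos, hneg⟩
          have hposI : ∀ M ∈ r.body.pos, sat I M t := fun M hM =>
            sat_mono (fun s => Set.inter_subset_right) M t (hpos M hM)
          have hposX : ∀ M ∈ r.body.pos, sat X M t := fun M hM =>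
            sat_mono (fun s => Set.inter_subset_left) M t (hpos M hM)
          refine (sat_head_iff _ r.head t).2 fun a s hF => ⟨?_, ?_⟩
          · rw [← hX]
            exact Or.inr ⟨r, hr, t, Or.inr ⟨hposX, hneg⟩, hF⟩
          · exact (sat_head_iff I r.head t).1 (cond2 r hr t ⟨hposI, hneg⟩) a s hF
      exact fun t a ha => ((hlow _ hJmod2 t) ha).1
    exact ⟨⟨hfix1, fun X hX => hleast1 X hX⟩, ⟨hfix2, fun X hX => hleast2 X hX⟩⟩
  · rintro ⟨⟨hfix1, hleast1⟩, -⟩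
    have hsub : ∀ t, A1 D P I I t ⊆ I t := fun t => (le_of_eq hfix1) t
    have hD : Interp.modelOfDataset I D := fun a δ hmem t ht =>
      hsub t (Or.inl ⟨δ, hmem, ht⟩)
    have cond2 : ∀ r ∈ P, ∀ t : T, Body.holds r.body I t → sat I r.head.toMetric t := by
      intro r hr t hb
      exact (sat_head_iff I r.head t).2 fun a s hF =>
        hsub s (Or.inr ⟨r, hr, t, ⟨⟨hb.1, hb.2⟩, ⟨hb.1, hb.2⟩⟩, hF⟩)
    have hIS : IsHTModel D P I I :=
      ⟨hD, fun r hr t => ⟨fun hb => cond2 r hr t ⟨hb.1, hb.2⟩,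
        fun hb => cond2 r hr t ⟨hb.1, hb.2⟩⟩⟩
    have hlow : ∀ J, IsHTModel D P J I → I ≤ J := by
      intro J hJ
      obtain ⟨hJD, hJrules⟩ := hJ
      set Z := OrderHom.lfp (reduct D P I) with hZdef
      have hRY : (reduct D P I) (fun t => J t ∩ I t) ≤ (fun t => J t ∩ I t) := by
        intro t a ha
        rcases mem_reduct.1 ha with h | ⟨r, hr, t', ⟨hp, hn⟩, hF⟩
        · obtain ⟨δ, hmem, ht⟩ := h
          exact ⟨hJD _ _ hmem t ht, hD _ _ hmem t ht⟩
        · have hposJ : ∀ M ∈ r.body.pos, sat J M t' := fun M hM =>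
            sat_mono (fun s => Set.inter_subset_left) M t' (hp M hM)
          have hposI : ∀ M ∈ r.body.pos, sat I M t' := fun M hM =>
            sat_mono (fun s => Set.inter_subset_right) M t' (hp M hM)
          constructor
          · exact (sat_head_iff J r.head t').1 ((hJrules r hr t').1 ⟨hposJ, hn⟩) a t hF
          · exact (sat_head_iff I r.head t').1 (cond2 r hr t' ⟨hposI, hn⟩) a t hF
      have hZY : Z ≤ (fun t => J t ∩ I t) := OrderHom.lfp_le _ hRY
      have hZI : ∀ s, Z s ⊆ I s := fun s =>
        (hZY s).trans (fun a ha => ha.2)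
      have hZfix : A1 D P Z I = Z := by
        have h1 : A1 D P Z I = (reduct D P I) Z := by
          funext t
          ext a
          rw [mem_reduct]
          simp only [A1, Set.mem_union, Set.mem_setOf_eq]
          constructor
          · rintro (h | ⟨r, hr, t', htv, hF⟩)
            · exact Or.inl h
            · exact Or.inr ⟨r, hr, t', ⟨htv.1.1, htv.1.2⟩, hF⟩
          · rintro (h | ⟨r, hr, t', ⟨hp, hn⟩, hF⟩)
            · exact Or.inl h
            · refine Or.inr ⟨r, hr, t', ⟨⟨hp, hn⟩, ⟨fun M hM => sat_mono hZI M t' (hp M hM),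
                fun M hM hs => hn M hM (sat_mono hZI M t' hs)⟩⟩, hF⟩
        rw [h1]
        exact OrderHom.map_lfp (reduct D P I)
      have hIZ : I ≤ Z := hleast1 hZfix
      exact fun t a ha => ((hZY t) (hIZ t ha)).1
    exact ⟨hIS, le_antisymm (le_sInf fun J hJ => hlow J hJ) (sInf_le hIS)⟩
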